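/- In the free Banach space construction over a metric space (X, d) with d ≤ 1, for any distinct points x₁, ..., xₙ ∈ X and scalars λ₁, ..., λₙ ∈ ℝ, the norm of Σᵢ λᵢ xᵢ in L(X) is at least (1/2) · (Σᵢ |λᵢ|) · min{d(xᵢ, xⱼ) : i ≠ j}. -/
import Mathlib


noncomputable section

/-- The metric on `X ⊔ {*}` (with `none` playing the role of the basepoint `*`),
where the new point `*` is at distance `1` from every point of `X`. -/
def optDist (X : Type) [MetricSpace X] : Option X → Option X → ℝ
  | some x, some y => dist x y
  | none, none => 0
  | _, _ => 1

/-- The norm on the free normed space `L(X)` over `(X, d)` with `d ≤ 1`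
(realized as finitely supported functions on `Option X`, with `none` the basepoint `*`):
the infimum of `∑ᵢ |λᵢ| d(xᵢ, yᵢ)` over all representations `∑ᵢ λᵢ xᵢ = w` with
`∑ᵢ λᵢ yᵢ ∈ Span{*}`. -/
def freeNorm (X : Type) [MetricSpace X] (w : Option X →₀ ℝ) : ℝ :=
  sInf { r : ℝ | ∃ (n : ℕ) (lam : Fin n → ℝ) (a b : Fin n → Option X),
    (∑ i, lam i • Finsupp.single (a i) (1 : ℝ)) = w ∧
    (∃ c : ℝ, (∑ i, lam i • Finsupp.single (b i) (1 : ℝ)) =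
        c • Finsupp.single (none : Option X) (1 : ℝ)) ∧
    r = ∑ i, |lam i| * optDist X (a i) (b i) }

lemma sign_mul_self_eq_abs (t : ℝ) : t * Real.sign t = |t| := by
  rcases lt_trichotomy t 0 with h | h | h
  · rw [Real.sign_of_neg h, abs_of_neg h]; ring
  · simp [h]
  · rw [Real.sign_of_pos h, abs_of_pos h]; ring

lemma abs_sign_le_one (t : ℝ) : |Real.sign t| ≤ 1 := by
  rcases lt_trichotomy t 0 with h | h | h
  · simp [Real.sign_of_neg h]
  · simp [h]
  · simp [Real.sign_of_pos h]

/-- for distinct points `x₁, ..., xₙ ∈ X` and scalars `λ₁, ..., λₙ ∈ ℝ`,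
`‖∑ᵢ λᵢ xᵢ‖ ≥ (1/2) · (∑ᵢ |λᵢ|) · min{d(xᵢ, xⱼ) : i ≠ j}` in `L(X)`
(the minimum over the distinct pairs is expressed as an infimum). -/
theorem freeNorm_lower_bound (X : Type) [MetricSpace X]
    (hd : ∀ x y : X, dist x y ≤ 1)
    {n : ℕ} (hn : 2 ≤ n) (x : Fin n → X) (hx : Function.Injective x)
    (lam : Fin n → ℝ) :
    (1 / 2) * (∑ i, |lam i|) *
        sInf { r : ℝ | ∃ i j : Fin n, i ≠ j ∧ r = dist (x i) (x j) } ≤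
      freeNorm X (∑ i, lam i • Finsupp.single (some (x i)) (1 : ℝ)) := by
  set δ := sInf { r : ℝ | ∃ i j : Fin n, i ≠ j ∧ r = dist (x i) (x j) } with hδdef
  have hδ0 : 0 ≤ δ :=
    Real.sInf_nonneg (by rintro r ⟨i, j, hij, rfl⟩; exact dist_nonneg)
  have hδle : ∀ i j : Fin n, i ≠ j → δ ≤ dist (x i) (x j) := by
    intro i j hij
    exact csInf_le ⟨0, by rintro r ⟨i, j, _, rfl⟩; exact dist_nonneg⟩ ⟨i, j, hij, rfl⟩
  have h01 : (⟨0, by omega⟩ : Fin n) ≠ ⟨1, by omega⟩ := by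
    simp [Fin.ext_iff]
  have hδ1 : δ ≤ 1 := le_trans (hδle _ _ h01) (hd _ _)
  -- the test function
  set g : X → Fin n → ℝ := fun z j => Real.sign (lam j) * max 0 (δ / 2 - dist z (x j))
    with hgdef
  set f : Option X → ℝ := fun u => u.elim 0 (fun z => ∑ j, g z j) with hfdef
  have hfnone : f none = 0 := rfl
  have hfsome : ∀ z : X, f (some z) = ∑ j, g z j := fun z => rfl
  -- bounds on g
  have hmaxle : ∀ (z : X) (j : Fin n), max 0 (δ / 2 - dist z (x j)) ≤ δ / 2 := by
    intro z j
    apply max_le (by linarith)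
    have := dist_nonneg (x := z) (y := x j)
    linarith
  have hgb : ∀ (z : X) (j : Fin n), |g z j| ≤ δ / 2 := by
    intro z j
    rw [hgdef]
    calc |Real.sign (lam j) * max 0 (δ / 2 - dist z (x j))|
        = |Real.sign (lam j)| * |max 0 (δ / 2 - dist z (x j))| := abs_mul _ _
      _ ≤ 1 * |max 0 (δ / 2 - dist z (x j))| := by
          exact mul_le_mul_of_nonneg_right (abs_sign_le_one _) (abs_nonneg _)
      _ = max 0 (δ / 2 - dist z (x j)) := by
          rw [one_mul, abs_of_nonneg (le_max_left _ _)]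
      _ ≤ δ / 2 := hmaxle z j
  have hgne : ∀ (z : X) (j : Fin n), g z j ≠ 0 →
      dist z (x j) < δ / 2 ∧ |g z j| ≤ δ / 2 - dist z (x j) := by
    intro z j hg
    have hmax : max 0 (δ / 2 - dist z (x j)) ≠ 0 := by
      intro h; apply hg; rw [hgdef]; simp [h]
    have hlt : 0 < δ / 2 - dist z (x j) := by
      by_contra h
      exact hmax (max_eq_left (by linarith))
    constructor
    · linarith
    · rw [hgdef]
      calc |Real.sign (lam j) * max 0 (δ / 2 - dist z (x j))|
          = |Real.sign (lam j)| * |max 0 (δ / 2 - dist z (x j))| := abs_mul _ _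
        _ ≤ 1 * |max 0 (δ / 2 - dist z (x j))| :=
            mul_le_mul_of_nonneg_right (abs_sign_le_one _) (abs_nonneg _)
        _ = max 0 (δ / 2 - dist z (x j)) := by
            rw [one_mul, abs_of_nonneg (le_max_left _ _)]
        _ = δ / 2 - dist z (x j) := max_eq_right (le_of_lt hlt)
  have hglip : ∀ (y z : X) (j : Fin n), |g y j - g z j| ≤ dist y z := by
    intro y z j
    rw [hgdef]
    calc |Real.sign (lam j) * max 0 (δ / 2 - dist y (x j)) -
            Real.sign (lam j) * max 0 (δ / 2 - dist z (x j))|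
        = |Real.sign (lam j)| *
            |max 0 (δ / 2 - dist y (x j)) - max 0 (δ / 2 - dist z (x j))| := by
          rw [← abs_mul, mul_sub]
      _ ≤ 1 * |max 0 (δ / 2 - dist y (x j)) - max 0 (δ / 2 - dist z (x j))| :=
          mul_le_mul_of_nonneg_right (abs_sign_le_one _) (abs_nonneg _)
      _ = |max (δ / 2 - dist y (x j)) 0 - max (δ / 2 - dist z (x j)) 0| := by
          rw [one_mul, max_comm 0 _, max_comm 0 _]
      _ ≤ |(δ / 2 - dist y (x j)) - (δ / 2 - dist z (x j))| := abs_max_sub_max_le_abs _ _ _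
      _ = |dist z (x j) - dist y (x j)| := by ring_nf
      _ = |dist y (x j) - dist z (x j)| := abs_sub_comm _ _
      _ ≤ dist y z := abs_dist_sub_le _ _ _
  have huniq : ∀ (z : X) (j k : Fin n), g z j ≠ 0 → g z k ≠ 0 → j = k := by
    intro z j k hj hk
    by_contra hjk
    have h1 := (hgne z j hj).1
    have h2 := (hgne z k hk).1
    have h3 := hδle j k hjk
    have h4 := dist_triangle (x j) z (x k)
    rw [dist_comm (x j) z] at h4
    linarith
  have hsum : ∀ z : X, (∑ j, g z j) = 0 ∨ ∃ j, g z j ≠ 0 ∧ (∑ k, g z k) = g z j := by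
    intro z
    by_cases h : ∀ j, g z j = 0
    · left; simp [h]
    · right
      push_neg at h
      obtain ⟨j, hj⟩ := h
      exact ⟨j, hj, Finset.sum_eq_single_of_mem j (Finset.mem_univ j)
        (fun k _ hkj => by
          by_contra hk
          exact hkj (huniq z k j hk hj))⟩
  have hfb : ∀ z : X, |f (some z)| ≤ δ / 2 := by
    intro z
    rw [hfsome]
    rcases hsum z with h | ⟨j, _, h⟩
    · rw [h]; simpa using by linarith
    · rw [h]; exact hgb z j
  -- Lipschitz property of f w.r.t. optDist
  have hflip : ∀ u v : Option X, |f u - f v| ≤ optDist X u v := by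
    intro u v
    match u, v with
    | none, none => simp [hfnone, optDist]
    | none, some z =>
        rw [hfnone]
        show |0 - f (some z)| ≤ 1
        rw [zero_sub, abs_neg]
        exact le_trans (hfb z) (by linarith)
    | some z, none =>
        rw [hfnone]
        show |f (some z) - 0| ≤ 1
        rw [sub_zero]
        exact le_trans (hfb z) (by linarith)
    | some y, some z =>
        show |f (some y) - f (some z)| ≤ dist y z
        rw [hfsome, hfsome]
        rcases hsum y with hy | ⟨j, hjne, hjy⟩ <;>
          rcases hsum z with hz | ⟨k, hkne, hkz⟩
        · rw [hy, hz]; simpa using dist_nonneg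
        · rw [hy, hkz]
          have hyk : g y k = 0 := by
            by_contra h
            have : (∑ j, g y j) = g y k := Finset.sum_eq_single_of_mem k
              (Finset.mem_univ k) (fun l _ hlk => by
                by_contra hl; exact hlk (huniq y l k hl h))
            rw [hy] at this
            exact h this.symm
          calc |0 - g z k| = |g y k - g z k| := by rw [hyk]
            _ ≤ dist y z := hglip y z k
        · rw [hz, hjy]
          have hzj : g z j = 0 := by
            by_contra h
            have : (∑ k, g z k) = g z j := Finset.sum_eq_single_of_mem j
              (Finset.mem_univ j) (fun l _ hlj => by
                by_contra hl; exact hlj (huniq z l j hl h))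
            rw [hz] at this
            exact h this.symm
          calc |g y j - 0| = |g y j - g z j| := by rw [hzj]
            _ ≤ dist y z := hglip y z j
        · rw [hjy, hkz]
          rcases eq_or_ne j k with rfl | hjk
          · exact hglip y z j
          · have h1 := (hgne y j hjne)
            have h2 := (hgne z k hkne)
            have h3 := hδle j k hjk
            have h4 := dist_triangle (x j) y (x k)
            have h5 := dist_triangle y z (x k)
            rw [dist_comm (x j) y] at h4
            calc |g y j - g z k| ≤ |g y j| + |g z k| := abs_sub _ _
              _ ≤ (δ / 2 - dist y (x j)) + (δ / 2 - dist z (x k)) :=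
                  add_le_add h1.2 h2.2
              _ ≤ dist y z := by linarith
  -- the linear functional
  set F := Finsupp.linearCombination ℝ f with hFdef
  have hFsum : ∀ (m : ℕ) (μ : Fin m → ℝ) (a : Fin m → Option X),
      F (∑ i, μ i • Finsupp.single (a i) (1 : ℝ)) = ∑ i, μ i * f (a i) := by
    intro m μ a
    rw [map_sum]
    refine Finset.sum_congr rfl fun i _ => ?_
    rw [map_smul, hFdef, Finsupp.linearCombination_single, smul_eq_mul, smul_eq_mul,
      one_mul]
  -- value of F on the given vector
  have hfx : ∀ i : Fin n, f (some (x i)) = Real.sign (lam i) * (δ / 2) := by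
    intro i
    rw [hfsome]
    have : (∑ j, g (x i) j) = g (x i) i := by
      refine Finset.sum_eq_single_of_mem i (Finset.mem_univ i) (fun j _ hji => ?_)
      have hdij : δ / 2 - dist (x i) (x j) ≤ 0 := by
        have h := hδle i j (Ne.symm hji)
        linarith
      rw [hgdef]
      simp only []
      rw [max_eq_left hdij, mul_zero]
    rw [this, hgdef]
    simp only []
    rw [dist_self, sub_zero, max_eq_right (by linarith)]
  have hFw : F (∑ i, lam i • Finsupp.single (some (x i)) (1 : ℝ)) =
      (δ / 2) * ∑ i, |lam i| := by
    rw [hFsum]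
    rw [Finset.mul_sum]
    refine Finset.sum_congr rfl fun i _ => ?_
    rw [hfx i, ← mul_assoc, sign_mul_self_eq_abs, mul_comm]
  -- main estimate
  apply le_csInf
  · exact ⟨∑ i, |lam i| * optDist X (some (x i)) none, n, lam,
      (fun i => some (x i)), (fun _ => none), rfl,
      ⟨∑ i, lam i, (Finset.sum_smul).symm⟩, rfl⟩
  · rintro r ⟨m, μ, a, b, hab, ⟨c, hc⟩, rfl⟩
    have hFb : F (∑ i, μ i • Finsupp.single (b i) (1 : ℝ)) = 0 := by
      rw [hc, map_smul, hFdef, Finsupp.linearCombination_single, hfnone]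
      simp
    have key : (∑ i, μ i * (f (a i) - f (b i))) = (δ / 2) * ∑ i, |lam i| := by
      have : (∑ i, μ i * (f (a i) - f (b i))) =
          (∑ i, μ i * f (a i)) - (∑ i, μ i * f (b i)) := by
        rw [← Finset.sum_sub_distrib]
        exact Finset.sum_congr rfl fun i _ => by ring
      rw [this, ← hFsum m μ a, ← hFsum m μ b, hab, hFw, hFb, sub_zero]
    have habs : (δ / 2) * (∑ i, |lam i|) ≤ ∑ i, |μ i| * optDist X (a i) (b i) := by
      have h0 : (0 : ℝ) ≤ (δ / 2) * (∑ i, |lam i|) :=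
        mul_nonneg (by linarith) (Finset.sum_nonneg fun i _ => abs_nonneg _)
      calc (δ / 2) * (∑ i, |lam i|)
          = |(δ / 2) * (∑ i, |lam i|)| := (abs_of_nonneg h0).symm
        _ = |∑ i, μ i * (f (a i) - f (b i))| := by rw [key]
        _ ≤ ∑ i, |μ i * (f (a i) - f (b i))| := Finset.abs_sum_le_sum_abs _ _
        _ = ∑ i, |μ i| * |f (a i) - f (b i)| :=
            Finset.sum_congr rfl fun i _ => abs_mul _ _
        _ ≤ ∑ i, |μ i| * optDist X (a i) (b i) :=
            Finset.sum_le_sum fun i _ =>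
              mul_le_mul_of_nonneg_left (hflip (a i) (b i)) (abs_nonneg _)
    have hring : (1 / 2) * (∑ i, |lam i|) * δ = δ / 2 * ∑ i, |lam i| := by ring
    rw [hring]
    exact habs
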